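/- Let (M, g) be a Riemannian manifold with (possibly nonempty) boundary, and let ρ : M → ℝ_{>0} be a smooth exhaustion function (all sublevel sets {ρ ≤ c} are compact) satisfying |∇ρ|_g ≤ 1/2 everywhere. Then g̃ := g − dρ ⊗ dρ is a Riemannian metric on M, and if j : (M, g̃) → ℝ^n is an isometric embedding, then the map i = (j, ρ) : M → ℝ^{n+1} is a proper isometric embedding of (M, g). -/

import Mathlib

open scoped Manifold Topology ENNReal
open Set

noncomputable section

/-- A smooth Riemannian metric on a smooth manifold `M` (possibly with boundary) modeled on the
model with corners `I`: a smoothly varying family of symmetric positive definite bilinear forms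
on the tangent spaces.  Smoothness is encoded by requiring that the associated quadratic form
is a smooth function on the tangent bundle. -/
structure SmoothRiemannianMetric {E : Type*} [NormedAddCommGroup E] [NormedSpace ℝ E]
    {H : Type*} [TopologicalSpace H] (I : ModelWithCorners ℝ E H)
    (M : Type*) [TopologicalSpace M] [ChartedSpace H M] [IsManifold I (⊤ : ℕ∞) M] :
    Type _ where
  inner : ∀ x : M, TangentSpace I x →L[ℝ] TangentSpace I x →L[ℝ] ℝ
  symm : ∀ (x : M) (v w : TangentSpace I x), inner x v w = inner x w v
  posDef : ∀ (x : M) (v : TangentSpace I x), v ≠ 0 → 0 < inner x v v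
  smooth : ContMDiff I.tangent 𝓘(ℝ, ℝ) (⊤ : ℕ∞)
    (fun v : TangentBundle I M => inner v.proj v.snd v.snd)

variable {E : Type*} [NormedAddCommGroup E] [NormedSpace ℝ E]
    {H : Type*} [TopologicalSpace H] {I : ModelWithCorners ℝ E H}
    {M : Type*} [TopologicalSpace M] [ChartedSpace H M] [IsManifold I (⊤ : ℕ∞) M]

/-- The Riemannian length of a curve `γ` between parameters `a` and `b`, i.e. the integral of
the `g`-norm of its velocity (the latter computed via `mfderiv`). -/
def riemannianLength (g : SmoothRiemannianMetric I M) (γ : ℝ → M) (a b : ℝ) : ℝ :=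
  ∫ t in a..b,
    Real.sqrt (g.inner (γ t) (mfderiv 𝓘(ℝ, ℝ) I γ t (show TangentSpace 𝓘(ℝ, ℝ) t from (1:ℝ)))
      (mfderiv 𝓘(ℝ, ℝ) I γ t (show TangentSpace 𝓘(ℝ, ℝ) t from (1:ℝ))))

/-- A curve `γ : ℝ → M` is piecewise `C¹` on `[a,b]` if it is continuous there and there is a
partition `a = t₀ < t₁ < ⋯ < tₙ = b` such that `γ` is `C¹` on each subinterval. -/
def PiecewiseC1On (I : ModelWithCorners ℝ E H) [IsManifold I (⊤ : ℕ∞) M] (γ : ℝ → M) (a b : ℝ) : Prop :=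
  ContinuousOn γ (Icc a b) ∧
  ∃ (n : ℕ) (t : Fin (n + 1) → ℝ), StrictMono t ∧ t 0 = a ∧ t (Fin.last n) = b ∧
    ∀ i : Fin n, ContMDiffOn 𝓘(ℝ, ℝ) I 1 γ (Icc (t i.castSucc) (t i.succ))

/-- The intrinsic (Riemannian) distance between two points: the infimum of Riemannian lengths of
piecewise `C¹` paths joining them. -/
def riemannianDist (g : SmoothRiemannianMetric I M) (x y : M) : ℝ :=
  sInf { L | ∃ γ : ℝ → M, PiecewiseC1On I γ 0 1 ∧ γ 0 = x ∧ γ 1 = y ∧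
    L = riemannianLength g γ 0 1 }

/-- The intrinsic (Riemannian) distance between two points of a subset `S`, computed using only
piecewise `C¹` paths with values in `S`. -/
def riemannianDistOn (g : SmoothRiemannianMetric I M) (S : Set M) (x y : M) : ℝ :=
  sInf { L | ∃ γ : ℝ → M, PiecewiseC1On I γ 0 1 ∧ (∀ t ∈ Icc (0:ℝ) 1, γ t ∈ S) ∧
    γ 0 = x ∧ γ 1 = y ∧ L = riemannianLength g γ 0 1 }

/-- `(M, g)` is metrically complete: every sequence which is Cauchy for the intrinsic Riemannian
distance converges (with respect to that distance). -/
def MetricallyComplete (g : SmoothRiemannianMetric I M) : Prop :=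
  ∀ u : ℕ → M,
    (∀ ε : ℝ, 0 < ε → ∃ N : ℕ, ∀ p ≥ N, ∀ q ≥ N, riemannianDist g (u p) (u q) < ε) →
    ∃ x : M, ∀ ε : ℝ, 0 < ε → ∃ N : ℕ, ∀ n ≥ N, riemannianDist g (u n) x < ε

/-- `f : M → M'` realizes `(M,g)` as an isometrically embedded submanifold of `(M',g')`:
`f` is a smooth topological embedding and the pullback of `g'` along `f` is `g`.
When `f` is regarded as an inclusion, this says `M ⊆ M'` and `g'|_M = g`, i.e. `(M',g')` is a
Riemannian extension of `(M,g)`. -/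
def IsIsometricEmbedding {E : Type*} [NormedAddCommGroup E] [NormedSpace ℝ E]
    {H : Type*} [TopologicalSpace H] {I : ModelWithCorners ℝ E H}
    {M : Type*} [TopologicalSpace M] [ChartedSpace H M] [IsManifold I (⊤ : ℕ∞) M]
    {E' : Type*} [NormedAddCommGroup E'] [NormedSpace ℝ E']
    {H' : Type*} [TopologicalSpace H'] {I' : ModelWithCorners ℝ E' H'}
    {M' : Type*} [TopologicalSpace M'] [ChartedSpace H' M'] [IsManifold I' (⊤ : ℕ∞) M']
    (g : SmoothRiemannianMetric I M) (g' : SmoothRiemannianMetric I' M') (f : M → M') : Prop :=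
  ContMDiff I I' (⊤ : ℕ∞) f ∧ Topology.IsEmbedding f ∧
    ∀ (x : M) (v w : TangentSpace I x),
      g'.inner (f x) (mfderiv I I' f x v) (mfderiv I I' f x w) = g.inner x v w


section AuxLemmas

open scoped RealInnerProductSpace

lemma tangent_snd_smooth : ContMDiff 𝓘(ℝ, ℝ).tangent 𝓘(ℝ, ℝ) (⊤ : ℕ∞)
    (fun p : TangentBundle 𝓘(ℝ, ℝ) ℝ => p.snd) := by
  refine contMDiff_iff.mpr ?_
  constructor
  · exact continuous_snd.comp (tangentBundleModelSpaceHomeomorph 𝓘(ℝ, ℝ)).continuous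
  · intro x y
    have h : ContDiffOn ℝ (↑(⊤ : ℕ∞)) (Prod.snd : ℝ × ℝ → ℝ)
        ((extChartAt 𝓘(ℝ, ℝ).tangent x).target ∩
          ↑(extChartAt 𝓘(ℝ, ℝ).tangent x).symm ⁻¹'
            ((fun p : TangentBundle 𝓘(ℝ, ℝ) ℝ => p.snd) ⁻¹' (extChartAt 𝓘(ℝ, ℝ) y).source)) :=
      contDiff_snd.contDiffOn
    refine h.congr fun z hz => ?_
    simp only [mfld_simps]
    rfl

/-- `(a, s) ↦ snoc a s` as a continuous linear map. -/
noncomputable def snocL (n : ℕ) :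
    (EuclideanSpace ℝ (Fin n) × ℝ) →L[ℝ] EuclideanSpace ℝ (Fin (n + 1)) :=
  LinearMap.toContinuousLinearMap
    { toFun := fun p => (EuclideanSpace.equiv (Fin (n + 1)) ℝ).symm
        (Fin.snoc (EuclideanSpace.equiv (Fin n) ℝ p.1) p.2)
      map_add' := by
        intro p q
        ext i
        induction i using Fin.lastCases <;>
          simp [Fin.snoc_castSucc, Fin.snoc_last]
      map_smul' := by
        intro c p
        ext i
        induction i using Fin.lastCases <;>
          simp [Fin.snoc_castSucc, Fin.snoc_last] }

lemma snocL_apply_castSucc (n : ℕ) (p : EuclideanSpace ℝ (Fin n) × ℝ) (k : Fin n) :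
    snocL n p k.castSucc = p.1 k := by
  simp [snocL, Fin.snoc_castSucc]

lemma snocL_apply_last (n : ℕ) (p : EuclideanSpace ℝ (Fin n) × ℝ) :
    snocL n p (Fin.last n) = p.2 := by
  simp [snocL, Fin.snoc_last]

lemma inner_snocL (n : ℕ) (p q : EuclideanSpace ℝ (Fin n) × ℝ) :
    ⟪snocL n p, snocL n q⟫ = ⟪p.1, q.1⟫ + p.2 * q.2 := by
  simp only [PiLp.inner_apply, RCLike.inner_apply, conj_trivial]
  rw [Fin.sum_univ_castSucc]
  simp [snocL_apply_castSucc, snocL_apply_last]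
  ring

/-- Projection dropping the last coordinate, as a continuous linear map. -/
noncomputable def projL (n : ℕ) :
    EuclideanSpace ℝ (Fin (n + 1)) →L[ℝ] EuclideanSpace ℝ (Fin n) :=
  LinearMap.toContinuousLinearMap
    { toFun := fun y => (EuclideanSpace.equiv (Fin n) ℝ).symm (fun k => y k.castSucc)
      map_add' := by intro p q; ext k; simp
      map_smul' := by intro c p; ext k; simp }

lemma projL_snocL (n : ℕ) (p : EuclideanSpace ℝ (Fin n) × ℝ) :
    projL n (snocL n p) = p.1 := by
  ext k
  simp [projL, snocL_apply_castSucc]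

lemma abs_apply_le_norm {ι : Type*} [Fintype ι] (y : EuclideanSpace ℝ ι) (i : ι) :
    |y i| ≤ ‖y‖ := by
  rw [EuclideanSpace.norm_eq, ← Real.sqrt_sq_eq_abs]
  apply Real.sqrt_le_sqrt
  have : ‖y i‖ ^ 2 ≤ ∑ j, ‖y j‖ ^ 2 :=
    Finset.single_le_sum (f := fun j => ‖y j‖ ^ 2) (fun j _ => sq_nonneg _) (Finset.mem_univ i)
  simpa [Real.norm_eq_abs, sq_abs] using this

end AuxLemmas

open scoped RealInnerProductSpace

/-- Let `(M, g)` be a Riemannian manifold with (possibly nonempty) boundary and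
let `ρ : M → ℝ_{>0}` be a smooth exhaustion function with `|∇ρ|_g ≤ 1/2` everywhere (expressed
equivalently as `(dρ(v))² ≤ (1/4) g(v,v)` for all tangent vectors `v`).  Then
`g̃ := g − dρ ⊗ dρ` is a Riemannian metric on `M`, and for any isometric embedding
`j : (M, g̃) → ℝⁿ`, the map `i = (j, ρ) : M → ℝ^{n+1}` is a proper isometric embedding
of `(M, g)`. -/
theorem proper_embedding_from_exhaustion {m : ℕ} [NeZero m]
    {M : Type} [TopologicalSpace M] [ChartedSpace (EuclideanHalfSpace m) M]
    [IsManifold (𝓡∂ m) (⊤ : ℕ∞) M]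
    (g : SmoothRiemannianMetric (𝓡∂ m) M)
    (ρ : M → ℝ)
    (hρsmooth : ContMDiff (𝓡∂ m) 𝓘(ℝ, ℝ) (⊤ : ℕ∞) ρ)
    (hρpos : ∀ x : M, 0 < ρ x)
    (hρexh : ∀ c : ℝ, IsCompact {x : M | ρ x ≤ c})
    (hρgrad : ∀ (x : M) (v : TangentSpace (𝓡∂ m) x),
      (show ℝ from mfderiv (𝓡∂ m) 𝓘(ℝ, ℝ) ρ x v) ^ 2 ≤ (1 / 4) * g.inner x v v) :
    -- `g̃ = g − dρ ⊗ dρ` is a Riemannian metric: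
    ∃ gt : SmoothRiemannianMetric (𝓡∂ m) M,
      (∀ (x : M) (v w : TangentSpace (𝓡∂ m) x),
        gt.inner x v w =
          g.inner x v w - (show ℝ from mfderiv (𝓡∂ m) 𝓘(ℝ, ℝ) ρ x v) *
            (show ℝ from mfderiv (𝓡∂ m) 𝓘(ℝ, ℝ) ρ x w)) ∧
      -- and for every isometric embedding `j` of `(M, g̃)` into `ℝⁿ`,
      ∀ (n : ℕ) (j : M → EuclideanSpace ℝ (Fin n)),
        ContMDiff (𝓡∂ m) 𝓘(ℝ, EuclideanSpace ℝ (Fin n)) (⊤ : ℕ∞) j →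
        Topology.IsEmbedding j →
        (∀ (x : M) (v w : TangentSpace (𝓡∂ m) x),
          ⟪(show EuclideanSpace ℝ (Fin n) from
              mfderiv (𝓡∂ m) 𝓘(ℝ, EuclideanSpace ℝ (Fin n)) j x v),
            (show EuclideanSpace ℝ (Fin n) from
              mfderiv (𝓡∂ m) 𝓘(ℝ, EuclideanSpace ℝ (Fin n)) j x w)⟫ = gt.inner x v w) →
        -- the map `i = (j, ρ)` is a proper isometric embedding of `(M, g)`:
        ∀ i : M → EuclideanSpace ℝ (Fin (n + 1)),
          (i = fun x => (EuclideanSpace.equiv (Fin (n + 1)) ℝ).symm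
              (Fin.snoc (EuclideanSpace.equiv (Fin n) ℝ (j x)) (ρ x))) →
          ContMDiff (𝓡∂ m) 𝓘(ℝ, EuclideanSpace ℝ (Fin (n + 1))) (⊤ : ℕ∞) i ∧
          Topology.IsEmbedding i ∧
          (∀ (x : M) (v w : TangentSpace (𝓡∂ m) x),
            ⟪(show EuclideanSpace ℝ (Fin (n + 1)) from
                mfderiv (𝓡∂ m) 𝓘(ℝ, EuclideanSpace ℝ (Fin (n + 1))) i x v),
              (show EuclideanSpace ℝ (Fin (n + 1)) from
                mfderiv (𝓡∂ m) 𝓘(ℝ, EuclideanSpace ℝ (Fin (n + 1))) i x w)⟫ = g.inner x v w) ∧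
          (∀ K : Set (EuclideanSpace ℝ (Fin (n + 1))), IsCompact K → IsCompact (i ⁻¹' K)) := by
  classical
  have hρdiff : MDifferentiable (𝓡∂ m) 𝓘(ℝ, ℝ) ρ := hρsmooth.mdifferentiable (by simp)
  -- the family of differentials of `ρ`
  set dρ : ∀ x : M, TangentSpace (𝓡∂ m) x →L[ℝ] ℝ :=
    fun x => mfderiv (𝓡∂ m) 𝓘(ℝ, ℝ) ρ x with hdρ
  refine ⟨⟨fun x => g.inner x - (dρ x).smulRight (dρ x), ?_, ?_, ?_⟩, ?_, ?_⟩
  · -- symmetry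
    intro x v w
    simp only [ContinuousLinearMap.sub_apply, ContinuousLinearMap.smulRight_apply,
      ContinuousLinearMap.smul_apply, smul_eq_mul, g.symm x v w]
    ring
  · -- positive definiteness
    intro x v hv
    have h1 := g.posDef x v hv
    have h2 := hρgrad x v
    simp only [ContinuousLinearMap.sub_apply, ContinuousLinearMap.smulRight_apply,
      ContinuousLinearMap.smul_apply, smul_eq_mul]
    have h2' : (dρ x v) ^ 2 ≤ 1 / 4 * g.inner x v v := h2
    rw [pow_two] at h2'
    linarith
  · -- smoothness
    have h1 : ContMDiff (𝓡∂ m).tangent 𝓘(ℝ, ℝ).tangent (⊤ : ℕ∞)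
        (tangentMap (𝓡∂ m) 𝓘(ℝ, ℝ) ρ) := hρsmooth.contMDiff_tangentMap (by exact_mod_cast (le_top : (⊤ : ℕ∞) + 1 ≤ ⊤))
    have h3 : ContMDiff (𝓡∂ m).tangent 𝓘(ℝ, ℝ) (⊤ : ℕ∞)
        (fun v : TangentBundle (𝓡∂ m) M => dρ v.proj v.snd) := tangent_snd_smooth.comp h1
    simp only [ContinuousLinearMap.sub_apply, ContinuousLinearMap.smulRight_apply,
      ContinuousLinearMap.smul_apply, smul_eq_mul]
    exact g.smooth.sub (h3.mul h3)
  · -- the formula for `g̃`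
    intro x v w
    simp only [ContinuousLinearMap.sub_apply, ContinuousLinearMap.smulRight_apply,
      ContinuousLinearMap.smul_apply, smul_eq_mul]
    rfl
  · -- the embedding statement
    intro n j hjsmooth hjemb hjiso i hi
    have hieq : i = fun x => snocL n (j x, ρ x) := by rw [hi]; rfl
    have hjdiff : MDifferentiable (𝓡∂ m) 𝓘(ℝ, EuclideanSpace ℝ (Fin n)) j :=
      hjsmooth.mdifferentiable (by simp)
    -- smoothness of `i`
    have hk : ContMDiff (𝓡∂ m) 𝓘(ℝ, EuclideanSpace ℝ (Fin n) × ℝ) (⊤ : ℕ∞)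
        (fun x => (j x, ρ x)) := by
      rw [modelWithCornersSelf_prod, ← chartedSpaceSelf_prod]
      exact hjsmooth.prodMk hρsmooth
    have hismooth : ContMDiff (𝓡∂ m) 𝓘(ℝ, EuclideanSpace ℝ (Fin (n + 1))) (⊤ : ℕ∞) i := by
      rw [hieq]
      exact (snocL n).contMDiff.comp hk
    have hicont : Continuous i := hismooth.continuous
    -- the derivative of `i`
    have hmf : ∀ x : M, mfderiv (𝓡∂ m) 𝓘(ℝ, EuclideanSpace ℝ (Fin (n + 1))) i x =
        (snocL n).comp ((mfderiv (𝓡∂ m) 𝓘(ℝ, EuclideanSpace ℝ (Fin n)) j x).prod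
          (mfderiv (𝓡∂ m) 𝓘(ℝ, ℝ) ρ x)) := by
      intro x
      have hkdiff : MDifferentiableAt (𝓡∂ m) 𝓘(ℝ, EuclideanSpace ℝ (Fin n) × ℝ)
          (fun x => (j x, ρ x)) x := (hk x).mdifferentiableAt (by simp)
      have hkprod : mfderiv (𝓡∂ m) 𝓘(ℝ, EuclideanSpace ℝ (Fin n) × ℝ)
          (fun x => (j x, ρ x)) x =
          (mfderiv (𝓡∂ m) 𝓘(ℝ, EuclideanSpace ℝ (Fin n)) j x).prod
            (mfderiv (𝓡∂ m) 𝓘(ℝ, ℝ) ρ x) := by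
        rw [modelWithCornersSelf_prod, ← chartedSpaceSelf_prod]
        exact (hjdiff x).mfderiv_prod (hρdiff x)
      have hcomp : mfderiv (𝓡∂ m) 𝓘(ℝ, EuclideanSpace ℝ (Fin (n + 1)))
          (⇑(snocL n) ∘ fun x => (j x, ρ x)) x =
          (mfderiv 𝓘(ℝ, EuclideanSpace ℝ (Fin n) × ℝ) 𝓘(ℝ, EuclideanSpace ℝ (Fin (n + 1)))
            (snocL n) ((fun x => (j x, ρ x)) x)).comp
            (mfderiv (𝓡∂ m) 𝓘(ℝ, EuclideanSpace ℝ (Fin n) × ℝ) (fun x => (j x, ρ x)) x) :=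
        mfderiv_comp x ((snocL n).mdifferentiableAt) hkdiff
      rw [hieq]
      show mfderiv (𝓡∂ m) 𝓘(ℝ, EuclideanSpace ℝ (Fin (n + 1)))
        (⇑(snocL n) ∘ fun x => (j x, ρ x)) x = _
      rw [hcomp, (snocL n).mfderiv_eq, hkprod]
      rfl
    refine ⟨hismooth, ?_, ?_, ?_⟩
    · -- embedding
      have hproj : (⇑(projL n)) ∘ i = j := by
        funext x
        rw [hieq]
        exact projL_snocL n (j x, ρ x)
      exact Topology.IsEmbedding.of_comp hicont (projL n).continuous (hproj ▸ hjemb)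
    · -- isometry
      intro x v w
      have hv : (show EuclideanSpace ℝ (Fin (n + 1)) from
          mfderiv (𝓡∂ m) 𝓘(ℝ, EuclideanSpace ℝ (Fin (n + 1))) i x v) =
          snocL n (mfderiv (𝓡∂ m) 𝓘(ℝ, EuclideanSpace ℝ (Fin n)) j x v, dρ x v) := by
        rw [hmf x]; rfl
      have hw : (show EuclideanSpace ℝ (Fin (n + 1)) from
          mfderiv (𝓡∂ m) 𝓘(ℝ, EuclideanSpace ℝ (Fin (n + 1))) i x w) =
          snocL n (mfderiv (𝓡∂ m) 𝓘(ℝ, EuclideanSpace ℝ (Fin n)) j x w, dρ x w) := by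
        rw [hmf x]; rfl
      rw [hv, hw, inner_snocL, hjiso x v w]
      simp only [ContinuousLinearMap.sub_apply, ContinuousLinearMap.smulRight_apply,
        ContinuousLinearMap.smul_apply, smul_eq_mul]
      ring
    · -- properness
      intro K hK
      obtain ⟨C, hC⟩ := hK.isBounded.exists_norm_le
      refine (hρexh C).of_isClosed_subset (hK.isClosed.preimage hicont) ?_
      intro x hx
      have h1 : ρ x = i x (Fin.last n) := by
        rw [hieq]; exact (snocL_apply_last n (j x, ρ x)).symm
      have h2 : |i x (Fin.last n)| ≤ ‖i x‖ := abs_apply_le_norm (i x) (Fin.last n)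
      have h3 : ‖i x‖ ≤ C := hC _ hx
      simp only [mem_setOf_eq]
      calc ρ x = i x (Fin.last n) := h1
        _ ≤ |i x (Fin.last n)| := le_abs_self _
        _ ≤ ‖i x‖ := h2
        _ ≤ C := h3

end
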